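/- Fix an integer m ≥ 1. For a sequence a of positive reals, the series ∑_{k=1}^∞ |log a_k| · |log x_k| converges for every x ∈ C_∞^G(Δ_G^m) if and only if it converges for every x ∈ υC_∞^G(Δ_G^m). (That is, the α-duals coincide: [C_∞^G(Δ_G^m)]^α = [υC_∞^G(Δ_G^m)]^α.) -/
import Mathlib


/-- Classical `m`-th order forward difference
`Δ^m y_k = ∑_{v=0}^m (−1)^v C(m,v) y_{k+v}`. -/
noncomputable def fdiff (m : ℕ) (y : ℕ → ℝ) (k : ℕ) : ℝ :=
  ∑ v ∈ Finset.range (m + 1), (-1 : ℝ) ^ v * (m.choose v : ℝ) * y (k + v)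

/-- The Cesàro mean `(1/n) ∑_{k=1}^n Δ^m (log x)_k`. -/
noncomputable def cesaro (m : ℕ) (x : ℕ → ℝ) (n : ℕ) : ℝ :=
  (1 / (n : ℝ)) * ∑ k ∈ Finset.Icc 1 n, fdiff m (fun j => Real.log (x j)) k

/-- Membership in the bigeometric Cesàro difference space `C_p^G(Δ_G^m)`. -/
def memCpG (m : ℕ) (p : ℝ) (x : ℕ → ℝ) : Prop :=
  (∀ k, 1 ≤ k → 0 < x k) ∧ Summable (fun n : ℕ => |cesaro m x n| ^ p)

/-- Membership in the bigeometric Cesàro difference space `C_∞^G(Δ_G^m)`. -/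
def memCinfG (m : ℕ) (x : ℕ → ℝ) : Prop :=
  (∀ k, 1 ≤ k → 0 < x k) ∧ ∃ C : ℝ, ∀ n : ℕ, |cesaro m x n| ≤ C

/-- the α-duals of `C_∞^G(Δ_G^m)` and `υC_∞^G(Δ_G^m)` coincide:
for a positive sequence `a`, the series `∑_{k≥1} |log a_k|·|log x_k|` converges
for every `x ∈ C_∞^G(Δ_G^m)` iff it converges for every `x ∈ υC_∞^G(Δ_G^m)`. -/
theorem CinfG_alpha_dual_eq (m : ℕ) (hm : 1 ≤ m) (a : ℕ → ℝ)
    (ha : ∀ k, 1 ≤ k → 0 < a k) :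
    (∀ x : ℕ → ℝ, memCinfG m x →
        Summable (fun k : ℕ => |Real.log (a (k + 1))| * |Real.log (x (k + 1))|)) ↔
      (∀ x : ℕ → ℝ, memCinfG m x → (∀ i, 1 ≤ i → i ≤ m → x i = 1) →
        Summable (fun k : ℕ => |Real.log (a (k + 1))| * |Real.log (x (k + 1))|)) := by
  constructor
  · intro h x hx _
    exact h x hx
  · intro h x hx
    obtain ⟨hxpos, C, hC⟩ := hx
    set x' : ℕ → ℝ := fun k => if 1 ≤ k ∧ k ≤ m then (1:ℝ) else x k with hx'def
    have hx'eq : ∀ j, m < j → x' j = x j := by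
      intro j hj
      simp only [hx'def]
      rw [if_neg]
      rintro ⟨_, h2⟩; omega
    have hfd : ∀ k, m < k → fdiff m (fun j => Real.log (x' j)) k
        = fdiff m (fun j => Real.log (x j)) k := by
      intro k hk
      unfold fdiff
      refine Finset.sum_congr rfl fun v hv => ?_
      simp only [hx'eq (k + v) (by omega : m < k + v)]
    set d : ℕ → ℝ := fun k => fdiff m (fun j => Real.log (x' j)) k
        - fdiff m (fun j => Real.log (x j)) k with hd
    have hd0 : ∀ k, m < k → d k = 0 := fun k hk => by simp [hd, hfd k hk]
    set D : ℝ := ∑ k ∈ Finset.Icc 1 m, |d k| with hD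
    have hDnn : 0 ≤ D := Finset.sum_nonneg fun k _ => abs_nonneg _
    have hx' : memCinfG m x' := by
      refine ⟨fun k hk => ?_, |C| + D, fun n => ?_⟩
      · by_cases hkm : k ≤ m
        · simp only [hx'def]; rw [if_pos ⟨hk, hkm⟩]; norm_num
        · rw [hx'eq k (by omega)]; exact hxpos k hk
      · rcases Nat.eq_zero_or_pos n with rfl | hn
        · have : cesaro m x' 0 = 0 := by simp [cesaro]
          rw [this, abs_zero]
          positivity
        · have hsum : ∑ k ∈ Finset.Icc 1 n, fdiff m (fun j => Real.log (x' j)) k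
              = (∑ k ∈ Finset.Icc 1 n, fdiff m (fun j => Real.log (x j)) k)
                + ∑ k ∈ Finset.Icc 1 n, d k := by
            rw [← Finset.sum_add_distrib]
            exact Finset.sum_congr rfl fun k _ => by simp [hd]
          have hDn : |∑ k ∈ Finset.Icc 1 n, d k| ≤ D := by
            calc |∑ k ∈ Finset.Icc 1 n, d k| ≤ ∑ k ∈ Finset.Icc 1 n, |d k| :=
                  Finset.abs_sum_le_sum_abs _ _
              _ ≤ ∑ k ∈ Finset.Icc 1 (max n m), |d k| :=
                  Finset.sum_le_sum_of_subset_of_nonneg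
                    (Finset.Icc_subset_Icc_right (le_max_left _ _))
                    (fun k _ _ => abs_nonneg _)
              _ = D := by
                  rw [hD]
                  symm
                  apply Finset.sum_subset (Finset.Icc_subset_Icc_right (le_max_right _ _))
                  intro k hk hk'
                  simp only [Finset.mem_Icc] at hk hk'
                  rw [hd0 k (by omega)]
                  simp
          have h1n : (0:ℝ) < (n:ℝ) := by exact_mod_cast hn
          have hces : cesaro m x' n
              = cesaro m x n + (1/(n:ℝ)) * ∑ k ∈ Finset.Icc 1 n, d k := by
            simp only [cesaro, hsum, mul_add]
          rw [hces]
          refine (abs_add_le _ _).trans (add_le_add ((hC n).trans (le_abs_self C)) ?_)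
          rw [abs_mul]
          have h1 : |1/(n:ℝ)| ≤ 1 := by
            rw [abs_of_nonneg (by positivity)]
            rw [div_le_one h1n]
            exact_mod_cast hn
          calc |1/(n:ℝ)| * |∑ k ∈ Finset.Icc 1 n, d k|
              ≤ 1 * |∑ k ∈ Finset.Icc 1 n, d k| := by
                exact mul_le_mul_of_nonneg_right h1 (abs_nonneg _)
            _ ≤ D := by rw [one_mul]; exact hDn
    have hx'1 : ∀ i, 1 ≤ i → i ≤ m → x' i = 1 := by
      intro i h1 h2
      simp only [hx'def]
      rw [if_pos ⟨h1, h2⟩]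
    have hs := h x' hx' hx'1
    have hs2 := (summable_nat_add_iff m).mpr hs
    have hs3 : Summable (fun k : ℕ =>
        |Real.log (a (k + m + 1))| * |Real.log (x (k + m + 1))|) := by
      refine hs2.congr fun k => ?_
      rw [hx'eq (k + m + 1) (by omega)]
    exact (summable_nat_add_iff m).mp (hs3.congr fun k => by ring_nf)
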